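/- arXiv:1110.0288 — 4 statements merged into one kernel-verified Lean document; each statement's English description precedes it below -/
import Mathlib

section
/- Let h, z : ℝ → ℝ be differentiable with h(x) > 0, and suppose the steady frictionless shallow water momentum equation holds: d/dx(q₀²/h + g h²/2) = -g h z'(x) for a constant discharge q₀. Then the Bernoulli quantity E(x) = q₀²/(2 g h(x)²) + h(x) + z(x) is constant. -/
/-- If the steady frictionless shallow water momentum equation
`d/dx (q₀²/h + g h²/2) = - g h z'` holds with `h > 0`, then the Bernoulli
quantity `E = q₀²/(2 g h²) + h + z` is constant. -/
theorem bernoulli_constant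
    (g q₀ : ℝ) (hg : 0 < g) (h z : ℝ → ℝ)
    (hpos : ∀ x, 0 < h x)
    (hdiff : Differentiable ℝ h) (zdiff : Differentiable ℝ z)
    (hmom : ∀ x, HasDerivAt (fun x => q₀ ^ 2 / h x + g * (h x) ^ 2 / 2)
      (-(g * h x * deriv z x)) x) :
    ∀ x y, q₀ ^ 2 / (2 * g * (h x) ^ 2) + h x + z x
         = q₀ ^ 2 / (2 * g * (h y) ^ 2) + h y + z y := by
  have key : ∀ x, HasDerivAt
      (fun x => q₀ ^ 2 / (2 * g * (h x) ^ 2) + h x + z x) 0 x := by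
    intro x
    have hx : h x ≠ 0 := (hpos x).ne'
    have hg' : g ≠ 0 := hg.ne'
    have dh := (hdiff x).hasDerivAt
    have dz := (zdiff x).hasDerivAt
    set h' := deriv h x
    set z' := deriv z x
    -- derivative of q₀²/h + g h²/2 computed directly
    have d1 : HasDerivAt (fun x => q₀ ^ 2 / h x + g * (h x) ^ 2 / 2)
        ((0 * h x - q₀ ^ 2 * h') / (h x) ^ 2 + g * (2 * h x ^ 1 * h') / 2) x := by
      exact (((hasDerivAt_const x (q₀ ^ 2)).div dh hx).add
        ((((dh.pow 2)).const_mul g).div_const 2))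
    have heq : (0 * h x - q₀ ^ 2 * h') / (h x) ^ 2 + g * (2 * h x ^ 1 * h') / 2
        = -(g * h x * z') := d1.unique (hmom x)
    have key2 : -(q₀ ^ 2 * h') / (h x) ^ 2 + g * h x * h' = -(g * h x * z') := by
      rw [← heq]; ring
    have d2 : HasDerivAt (fun x => q₀ ^ 2 / (2 * g * (h x) ^ 2) + h x + z x)
        ((0 * (2 * g * (h x) ^ 2) - q₀ ^ 2 * (2 * g * (2 * h x ^ 1 * h'))) /
          (2 * g * (h x) ^ 2) ^ 2 + h' + z') x := by
      have : HasDerivAt (fun x => 2 * g * (h x) ^ 2) (2 * g * (2 * h x ^ 1 * h')) x :=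
        (dh.pow 2).const_mul (2 * g)
      exact (((hasDerivAt_const x (q₀ ^ 2)).div this
        (by positivity)).add dh).add dz
    convert d2 using 1
    have hz' : z' = (q₀ ^ 2 * h') / (g * (h x) ^ 3) - h' := by
      field_simp at key2 ⊢
      nlinarith [key2, sq_nonneg (h x)]
    rw [hz']
    field_simp
    ring
  intro x y
  exact (is_const_of_deriv_eq_zero
    (fun t => ((key t).differentiableAt))
    (fun t => (key t).deriv)) x y
end

section
/- In the Stoker dam-break solution, the middle-state speed c_m = √(g h_m) satisfies the polynomial equation −8 g h_r c_m² (g h_l − c_m²)² + (c_m² − g h_r)² (c_m² + g h_r) = 0, and for 0 < h_r < h_l this equation has a solution c_m with √(g h_r) < c_m < √(g h_l). -/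
/-- Existence of the Stoker middle-state speed: for `0 < h_r < h_l` the
polynomial `P(c) = -8 g h_r c² (g h_l - c²)² + (c² - g h_r)² (c² + g h_r)`
has a root `c_m` with `√(g h_r) < c_m < √(g h_l)`. -/
theorem stoker_middle_state_exists
    (g hr hl : ℝ) (hg : 0 < g) (hhr : 0 < hr) (hrl : hr < hl) :
    ∃ cm : ℝ, Real.sqrt (g * hr) < cm ∧ cm < Real.sqrt (g * hl) ∧
      -8 * g * hr * cm ^ 2 * (g * hl - cm ^ 2) ^ 2 +
        (cm ^ 2 - g * hr) ^ 2 * (cm ^ 2 + g * hr) = 0 := by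
  set f : ℝ → ℝ := fun c =>
    -8 * g * hr * c ^ 2 * (g * hl - c ^ 2) ^ 2 +
      (c ^ 2 - g * hr) ^ 2 * (c ^ 2 + g * hr) with hf
  have hgr : (0:ℝ) < g * hr := mul_pos hg hhr
  have hgl : (0:ℝ) < g * hl := mul_pos hg (hhr.trans hrl)
  have hlt : g * hr < g * hl := by nlinarith
  have ha : Real.sqrt (g * hr) ≤ Real.sqrt (g * hl) :=
    Real.sqrt_le_sqrt hlt.le
  have hsa : Real.sqrt (g * hr) ^ 2 = g * hr := Real.sq_sqrt hgr.le
  have hsb : Real.sqrt (g * hl) ^ 2 = g * hl := Real.sq_sqrt hgl.le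
  have hfa : f (Real.sqrt (g * hr)) < 0 := by
    simp only [hf, hsa]; nlinarith [mul_pos (mul_pos hgr hgr) (pow_pos (sub_pos.mpr hlt) 2)]
  have hfb : 0 < f (Real.sqrt (g * hl)) := by
    simp only [hf, hsb]; nlinarith [mul_pos (pow_pos (sub_pos.mpr hlt) 2) (add_pos hgl hgr)]
  have hcont : ContinuousOn f (Set.Icc (Real.sqrt (g * hr)) (Real.sqrt (g * hl))) := by
    fun_prop
  have h0 : (0:ℝ) ∈ Set.Ioo (f (Real.sqrt (g * hr))) (f (Real.sqrt (g * hl))) :=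
    ⟨hfa, hfb⟩
  obtain ⟨cm, hcm, hcm0⟩ := intermediate_value_Ioo ha hcont h0
  exact ⟨cm, hcm.1, hcm.2, hcm0⟩
end

section
/- The 1D Thacker oscillating solution — with topography z(x) = h₀((x − L/2)²/a² − 1), free surface η(t,x) = z(x) + h(t,x) satisfying h(t,x) = −h₀(((x−L/2)/a + (B/√(2 g h₀)) cos(ωt))² − 1) and velocity u(t) = B sin(ωt) where ω = √(2 g h₀)/a — satisfies the 1D shallow water equations ∂ₜh + ∂ₓ(hu) = 0 and ∂ₜu + u ∂ₓu + g ∂ₓ(h + z) = 0 wherever h > 0. -/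
/-- The 1D Thacker oscillating planar solution in a parabolic bowl satisfies
the nonconservative 1D shallow water equations wherever `h > 0`. -/
theorem thacker_1d_solves_shallow_water
    (g h₀ a L : ℝ) (hg : 0 < g) (hh₀ : 0 < h₀) (ha : 0 < a)
    (B ω : ℝ)
    (hB : B = Real.sqrt (2 * g * h₀) / (2 * a))
    (hω : ω = Real.sqrt (2 * g * h₀) / a)
    (z : ℝ → ℝ) (hz : ∀ x, z x = h₀ * ((x - L / 2) ^ 2 / a ^ 2 - 1))
    (h : ℝ → ℝ → ℝ)
    (hh : ∀ t x, h t x = -h₀ *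
        (((x - L / 2) / a + B / Real.sqrt (2 * g * h₀) * Real.cos (ω * t)) ^ 2 - 1))
    (u : ℝ → ℝ) (hu : ∀ t, u t = B * Real.sin (ω * t)) :
    ∀ t x : ℝ, 0 < h t x →
      deriv (fun τ => h τ x) t + deriv (fun ξ => h t ξ * u t) x = 0 ∧
      deriv u t + u t * deriv (fun _ : ℝ => u t) x +
        g * deriv (fun ξ => h t ξ + z ξ) x = 0 := by
  intro t x _
  set s : ℝ := Real.sqrt (2 * g * h₀) with hsdef
  have hs2 : s ^ 2 = 2 * g * h₀ := Real.sq_sqrt (by positivity)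
  have hspos : 0 < s := Real.sqrt_pos.mpr (by positivity)
  have hsne : s ≠ 0 := ne_of_gt hspos
  have hane : a ≠ 0 := ne_of_gt ha
  -- time derivative of h at (t,x)
  have Hin : HasDerivAt (fun τ : ℝ => (x - L / 2) / a + B / s * Real.cos (ω * τ))
      (B / s * (-Real.sin (ω * t) * ω)) t := by
    have h1 : HasDerivAt (fun τ : ℝ => ω * τ) ω t := by
      simpa using (hasDerivAt_id t).const_mul ω
    have h2 : HasDerivAt (fun τ : ℝ => Real.cos (ω * τ)) (-Real.sin (ω * t) * ω) t :=
      (Real.hasDerivAt_cos (ω * t)).comp t h1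
    simpa using (h2.const_mul (B / s)).const_add ((x - L / 2) / a)
  have Ht : HasDerivAt (fun τ : ℝ => h τ x)
      (-h₀ * (2 * ((x - L / 2) / a + B / s * Real.cos (ω * t)) ^ 1 *
        (B / s * (-Real.sin (ω * t) * ω)))) t := by
    have := ((Hin.pow 2).sub_const 1).const_mul (-h₀)
    simp only [Nat.cast_ofNat, Pi.pow_apply, Nat.reduceSub, id_eq] at this
    refine HasDerivAt.congr_of_eventuallyEq ?_ (Filter.Eventually.of_forall fun τ => hh τ x)
    convert this using 1
  -- space derivative of h at (t,x)
  have Hinx : HasDerivAt (fun ξ : ℝ => (ξ - L / 2) / a + B / s * Real.cos (ω * t))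
      (1 / a) x := by
    simpa using (((hasDerivAt_id x).sub_const (L / 2)).div_const a).add_const
      (B / s * Real.cos (ω * t))
  have Hx : HasDerivAt (fun ξ : ℝ => h t ξ)
      (-h₀ * (2 * ((x - L / 2) / a + B / s * Real.cos (ω * t)) ^ 1 * (1 / a))) x := by
    have := ((Hinx.pow 2).sub_const 1).const_mul (-h₀)
    simp only [Nat.cast_ofNat, Pi.pow_apply, Nat.reduceSub, id_eq] at this
    refine HasDerivAt.congr_of_eventuallyEq ?_ (Filter.Eventually.of_forall fun ξ => hh t ξ)
    convert this using 1
  -- derivative of z at x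
  have Hz : HasDerivAt z (h₀ * (2 * (x - L / 2) ^ 1 * 1 / a ^ 2)) x := by
    have := ((((hasDerivAt_id x).sub_const (L / 2)).pow 2).div_const (a ^ 2)).sub_const 1
      |>.const_mul h₀
    simp only [Nat.cast_ofNat, Pi.pow_apply, Nat.reduceSub, id_eq] at this
    refine HasDerivAt.congr_of_eventuallyEq ?_ (Filter.Eventually.of_forall fun ξ => hz ξ)
    convert this using 1
  -- derivative of u at t
  have Hu : HasDerivAt u (B * (Real.cos (ω * t) * ω)) t := by
    have h1 : HasDerivAt (fun τ : ℝ => ω * τ) ω t := by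
      simpa using (hasDerivAt_id t).const_mul ω
    have h2 : HasDerivAt (fun τ : ℝ => Real.sin (ω * τ)) (Real.cos (ω * t) * ω) t :=
      (Real.hasDerivAt_sin (ω * t)).comp t h1
    refine HasDerivAt.congr_of_eventuallyEq ?_ (Filter.Eventually.of_forall fun τ => hu τ)
    exact h2.const_mul B
  have d1 : deriv (fun τ => h τ x) t =
      -h₀ * (2 * ((x - L / 2) / a + B / s * Real.cos (ω * t)) ^ 1 *
        (B / s * (-Real.sin (ω * t) * ω))) := Ht.deriv
  have d2 : deriv (fun ξ => h t ξ * u t) x =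
      (-h₀ * (2 * ((x - L / 2) / a + B / s * Real.cos (ω * t)) ^ 1 * (1 / a))) * u t :=
    (Hx.mul_const (u t)).deriv
  have d3 : deriv (fun ξ => h t ξ + z ξ) x =
      (-h₀ * (2 * ((x - L / 2) / a + B / s * Real.cos (ω * t)) ^ 1 * (1 / a))) +
        h₀ * (2 * (x - L / 2) ^ 1 * 1 / a ^ 2) := (Hx.add Hz).deriv
  have d4 : deriv u t = B * (Real.cos (ω * t) * ω) := Hu.deriv
  have d5 : deriv (fun _ : ℝ => u t) x = 0 := deriv_const x (u t)
  constructor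
  · rw [d1, d2, hu, hB, hω]
    field_simp
    ring
  · rw [d3, d4, d5, hB, hω]
    field_simp
    linear_combination (Real.cos (s * t / a)) * hs2
end

section
/- The 2D Thacker planar surface in a paraboloid — topography z(x,y) = −h₀(1 − r²/a²) with r² = (x−L/2)² + (y−L/2)², height h(x,y,t) = (η h₀/a²)(2(x−L/2)cos(ωt) + 2(y−L/2)sin(ωt) − η) − z(x,y), velocities u(t) = −η ω sin(ωt), v(t) = η ω cos(ωt), ω = √(2 g h₀)/a — satisfies the 2D shallow water equations ∂ₜh + ∂ₓ(hu) + ∂_y(hv) = 0, ∂ₜu + u∂ₓu + v∂_yu + g∂ₓ(h+z) = 0, ∂ₜv + u∂ₓv + v∂_yv + g∂_y(h+z) = 0 wherever h > 0. -/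
/-- The 2D Thacker planar surface in a paraboloid satisfies the
nonconservative 2D shallow water equations with topography wherever `h > 0`. -/
theorem thacker_2d_planar_solves_shallow_water
    (g h₀ a η L : ℝ) (hg : 0 < g) (hh₀ : 0 < h₀) (ha : 0 < a)
    (ω : ℝ) (hω : ω = Real.sqrt (2 * g * h₀) / a)
    (z : ℝ → ℝ → ℝ)
    (hz : ∀ x y, z x y = -h₀ * (1 - ((x - L / 2) ^ 2 + (y - L / 2) ^ 2) / a ^ 2))
    (h : ℝ → ℝ → ℝ → ℝ)
    (hh : ∀ t x y, h t x y = η * h₀ / a ^ 2 *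
        (2 * (x - L / 2) * Real.cos (ω * t) + 2 * (y - L / 2) * Real.sin (ω * t) - η)
        - z x y)
    (u v : ℝ → ℝ)
    (hu : ∀ t, u t = -η * ω * Real.sin (ω * t))
    (hv : ∀ t, v t = η * ω * Real.cos (ω * t)) :
    ∀ t x y : ℝ, 0 < h t x y →
      deriv (fun τ => h τ x y) t + deriv (fun ξ => h t ξ y * u t) x +
        deriv (fun ζ => h t x ζ * v t) y = 0 ∧
      deriv u t + u t * deriv (fun _ : ℝ => u t) x + v t * deriv (fun _ : ℝ => u t) y +
        g * deriv (fun ξ => h t ξ y + z ξ y) x = 0 ∧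
      deriv v t + u t * deriv (fun _ : ℝ => v t) x + v t * deriv (fun _ : ℝ => v t) y +
        g * deriv (fun ζ => h t x ζ + z x ζ) y = 0 := by
  intro t x y _
  have hω2 : ω ^ 2 = 2 * g * h₀ / a ^ 2 := by
    rw [hω, div_pow, Real.sq_sqrt (by positivity)]
  set c := Real.cos (ω * t) with hc'
  set s := Real.sin (ω * t) with hs'
  -- time derivatives of cos(ωτ), sin(ωτ)
  have hc : HasDerivAt (fun τ => Real.cos (ω * τ)) (-s * ω) t := by
    simpa [Function.comp_def, hs'] using (Real.hasDerivAt_cos (ω * t)).comp t ((hasDerivAt_id t).const_mul ω)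
  have hs : HasDerivAt (fun τ => Real.sin (ω * τ)) (c * ω) t := by
    simpa [Function.comp_def, hc'] using (Real.hasDerivAt_sin (ω * t)).comp t ((hasDerivAt_id t).const_mul ω)
  -- time derivative of h
  have H1 : HasDerivAt (fun τ => h τ x y)
      (η * h₀ / a ^ 2 * (2 * (x - L / 2) * (-s * ω) + 2 * (y - L / 2) * (c * ω))) t := by
    simp only [hh]
    exact ((((hc.const_mul (2 * (x - L / 2))).add
      (hs.const_mul (2 * (y - L / 2)))).sub_const η).const_mul (η * h₀ / a ^ 2)).sub_const
      (z x y)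
  -- x-derivatives
  have hidx : HasDerivAt (fun ξ : ℝ => ξ - L / 2) 1 x := (hasDerivAt_id x).sub_const _
  have Hzx : HasDerivAt (fun ξ => z ξ y)
      (-h₀ * -((2 * (x - L / 2) ^ 1 * 1 + 0) / a ^ 2)) x := by
    simp only [hz]
    exact (((((hidx.pow 2).add (hasDerivAt_const x ((y - L / 2) ^ 2))).div_const
      (a ^ 2)).const_sub 1).const_mul (-h₀))
  have Hpx : HasDerivAt (fun ξ => η * h₀ / a ^ 2 *
      (2 * (ξ - L / 2) * c + 2 * (y - L / 2) * s - η))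
      (η * h₀ / a ^ 2 * (2 * 1 * c + 0 - 0)) x := by
    exact ((((hidx.const_mul 2).mul_const c).add (hasDerivAt_const x (2 * (y - L / 2) * s))).sub
      (hasDerivAt_const x η)).const_mul _
  have H2 : deriv (fun ξ => h t ξ y * u t) x =
      (η * h₀ / a ^ 2 * (2 * 1 * c + 0 - 0) -
        -h₀ * -((2 * (x - L / 2) ^ 1 * 1 + 0) / a ^ 2)) * u t := by
    have hd : HasDerivAt (fun ξ => h t ξ y * u t)
        ((η * h₀ / a ^ 2 * (2 * 1 * c + 0 - 0) - -h₀ * -((2 * (x - L / 2) ^ 1 * 1 + 0) / a ^ 2)) * u t) x := by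
      simp only [hh]
      exact (Hpx.sub Hzx).mul_const (u t)
    exact hd.deriv
  have H2' : deriv (fun ξ => h t ξ y + z ξ y) x =
      (η * h₀ / a ^ 2 * (2 * 1 * c + 0 - 0) -
        -h₀ * -((2 * (x - L / 2) ^ 1 * 1 + 0) / a ^ 2)) +
        -h₀ * -((2 * (x - L / 2) ^ 1 * 1 + 0) / a ^ 2) := by
    have hd : HasDerivAt (fun ξ => h t ξ y + z ξ y)
        (η * h₀ / a ^ 2 * (2 * 1 * c + 0 - 0) - -h₀ * -((2 * (x - L / 2) ^ 1 * 1 + 0) / a ^ 2) + -h₀ * -((2 * (x - L / 2) ^ 1 * 1 + 0) / a ^ 2)) x := by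
      simp only [hh]
      exact (Hpx.sub Hzx).add Hzx
    exact hd.deriv
  -- y-derivatives
  have hidy : HasDerivAt (fun ζ : ℝ => ζ - L / 2) 1 y := (hasDerivAt_id y).sub_const _
  have Hzy : HasDerivAt (fun ζ => z x ζ)
      (-h₀ * -((0 + 2 * (y - L / 2) ^ 1 * 1) / a ^ 2)) y := by
    simp only [hz]
    exact (((((hasDerivAt_const y ((x - L / 2) ^ 2)).add (hidy.pow 2)).div_const
      (a ^ 2)).const_sub 1).const_mul (-h₀))
  have Hpy : HasDerivAt (fun ζ => η * h₀ / a ^ 2 *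
      (2 * (x - L / 2) * c + 2 * (ζ - L / 2) * s - η))
      (η * h₀ / a ^ 2 * (0 + 2 * 1 * s - 0)) y := by
    exact (((hasDerivAt_const y (2 * (x - L / 2) * c)).add
      ((hidy.const_mul 2).mul_const s)).sub (hasDerivAt_const y η)).const_mul _
  have H3 : deriv (fun ζ => h t x ζ * v t) y =
      (η * h₀ / a ^ 2 * (0 + 2 * 1 * s - 0) -
        -h₀ * -((0 + 2 * (y - L / 2) ^ 1 * 1) / a ^ 2)) * v t := by
    have hd : HasDerivAt (fun ζ => h t x ζ * v t)
        ((η * h₀ / a ^ 2 * (0 + 2 * 1 * s - 0) - -h₀ * -((0 + 2 * (y - L / 2) ^ 1 * 1) / a ^ 2)) * v t) y := by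
      simp only [hh]
      exact (Hpy.sub Hzy).mul_const (v t)
    exact hd.deriv
  have H3' : deriv (fun ζ => h t x ζ + z x ζ) y =
      (η * h₀ / a ^ 2 * (0 + 2 * 1 * s - 0) -
        -h₀ * -((0 + 2 * (y - L / 2) ^ 1 * 1) / a ^ 2)) +
        -h₀ * -((0 + 2 * (y - L / 2) ^ 1 * 1) / a ^ 2) := by
    have hd : HasDerivAt (fun ζ => h t x ζ + z x ζ)
        (η * h₀ / a ^ 2 * (0 + 2 * 1 * s - 0) - -h₀ * -((0 + 2 * (y - L / 2) ^ 1 * 1) / a ^ 2) + -h₀ * -((0 + 2 * (y - L / 2) ^ 1 * 1) / a ^ 2)) y := by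
      simp only [hh]
      exact (Hpy.sub Hzy).add Hzy
    exact hd.deriv
  -- time derivatives of u and v
  have Hu : deriv u t = -η * ω * (c * ω) := by
    have : HasDerivAt u (-η * ω * (c * ω)) t := by
      rw [show u = fun τ => -η * ω * Real.sin (ω * τ) from funext hu]
      exact hs.const_mul _
    exact this.deriv
  have Hv : deriv v t = η * ω * (-s * ω) := by
    have : HasDerivAt v (η * ω * (-s * ω)) t := by
      rw [show v = fun τ => η * ω * Real.cos (ω * τ) from funext hv]
      exact hc.const_mul _
    exact this.deriv
  refine ⟨?_, ?_, ?_⟩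
  · rw [H1.deriv, H2, H3, hu, hv]
    ring
  · rw [Hu, H2', deriv_const, deriv_const]
    have ha' : (a : ℝ) ≠ 0 := ne_of_gt ha
    have hω2' : ω ^ 2 * a ^ 2 = 2 * g * h₀ := by
      field_simp at hω2; linarith
    field_simp
    linear_combination (-(η * c)) * hω2'
  · rw [Hv, H3', deriv_const, deriv_const]
    have ha' : (a : ℝ) ≠ 0 := ne_of_gt ha
    have hω2' : ω ^ 2 * a ^ 2 = 2 * g * h₀ := by
      field_simp at hω2; linarith
    field_simp
    linear_combination (-(η * s)) * hω2'
end
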